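/- arXiv:2005.03190 — 6 statements merged into one kernel-verified Lean document; each statement's English description precedes it below -/
import Mathlib

section
/- Let y₁,…,y_N, x̃₁,…,x̃_N ∈ ℝ³ with Σᵢ mᵢ x̃ᵢ = 0, mᵢ, kᵢ > 0, M = Σᵢ mᵢ, μ > 0, J = −Σᵢ mᵢ (x̃ᵢ)̂². For a state (p, R, v, ω) with Rᵀ R = I, define the total force f = Σᵢ kᵢ(yᵢ − R x̃ᵢ − p) − μ M v and total torque τ = Σᵢ (kᵢ x̃ᵢ × (Rᵀ(yᵢ − p)) − μ mᵢ x̃ᵢ × (ω × x̃ᵢ)). Then the instantaneous rate of change of the total energy along the dynamics satisfies ⟨v, f⟩ + ⟨ω, τ − ω × J ω⟩ + Σᵢ kᵢ ⟨yᵢ − R x̃ᵢ − p, −R(ω × x̃ᵢ) − v⟩ = −μ M ‖v‖² − μ ⟨ω, J ω⟩ ≤ 0. -/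
open Matrix Filter
open scoped RealInnerProductSpace

noncomputable section

/-- Vectors in ℝ³ with the Euclidean norm. -/
abbrev V3 : Type := EuclideanSpace ℝ (Fin 3)

/-- The cross product on ℝ³. -/
def cross3 (a b : V3) : V3 :=
  WithLp.toLp 2 ![a 1 * b 2 - a 2 * b 1, a 2 * b 0 - a 0 * b 2, a 0 * b 1 - a 1 * b 0]

/-- The skew-symmetric matrix `â` of a vector, satisfying `â b = a × b`. -/
def hat (a : V3) : Matrix (Fin 3) (Fin 3) ℝ :=
  !![0, -(a 2), a 1; a 2, 0, -(a 0); -(a 1), a 0, 0]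

/-- Action of a 3×3 matrix on a vector in ℝ³. -/
def act (R : Matrix (Fin 3) (Fin 3) ℝ) (v : V3) : V3 := WithLp.toLp 2 (R.mulVec v)

/-- Membership in SO(3). -/
def isSO3 (R : Matrix (Fin 3) (Fin 3) ℝ) : Prop := Rᵀ * R = 1 ∧ R.det = 1

lemma edr_ip (a b : V3) : ⟪a, b⟫ = a 0 * b 0 + a 1 * b 1 + a 2 * b 2 := by
  simp [PiLp.inner_apply, Fin.sum_univ_three, RCLike.inner_apply, conj_trivial]; ring
lemma edr_inner_dot (a b : V3) : ⟪a, b⟫ = a ⬝ᵥ b := by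
  simp [edr_ip, dotProduct, Fin.sum_univ_three]
lemma edr_triple (a b c : V3) : ⟪a, cross3 b c⟫ = ⟪c, cross3 a b⟫ := by
  simp [PiLp.inner_apply, RCLike.inner_apply, conj_trivial, Fin.sum_univ_three, cross3]; ring
lemma edr_cross_left (a b : V3) : ⟪a, cross3 a b⟫ = 0 := by
  simp [PiLp.inner_apply, RCLike.inner_apply, conj_trivial, Fin.sum_univ_three, cross3]; ring
lemma edr_cross_right (a b : V3) : ⟪b, cross3 a b⟫ = 0 := by
  simp [PiLp.inner_apply, RCLike.inner_apply, conj_trivial, Fin.sum_univ_three, cross3]; ring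
lemma edr_ortho {R : Matrix (Fin 3) (Fin 3) ℝ} (hR : Rᵀ * R = 1) (a b : V3) :
    ⟪act R a, act R b⟫ = ⟪a, b⟫ := by
  rw [edr_inner_dot, edr_inner_dot]
  show (R.mulVec a) ⬝ᵥ (R.mulVec b) = a ⬝ᵥ b
  rw [Matrix.dotProduct_mulVec, ← Matrix.mulVec_transpose, Matrix.mulVec_mulVec, hR,
    Matrix.one_mulVec]
lemma edr_adj (R : Matrix (Fin 3) (Fin 3) ℝ) (a b : V3) :
    ⟪act Rᵀ a, b⟫ = ⟪a, act R b⟫ := by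
  rw [edr_inner_dot, edr_inner_dot]
  show (Rᵀ.mulVec a) ⬝ᵥ b = a ⬝ᵥ (R.mulVec b)
  rw [Matrix.mulVec_transpose, ← Matrix.dotProduct_mulVec]
lemma edr_hat_act (a b : V3) : act (hat a) b = cross3 a b := by
  ext j; fin_cases j <;>
    simp [act, hat, Matrix.mulVec, dotProduct, Fin.sum_univ_three, cross3] <;> ring
lemma edr_hat2 (a b : V3) : act (hat a * hat a) b = cross3 a (cross3 a b) := by
  unfold act
  rw [← Matrix.mulVec_mulVec]
  rw [show hat a *ᵥ b.ofLp = (cross3 a b).ofLp from congrArg WithLp.ofLp (edr_hat_act a b)]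
  exact edr_hat_act a _
lemma edr_sum_mulVec {N : ℕ} (A : Fin N → Matrix (Fin 3) (Fin 3) ℝ) (w : Fin 3 → ℝ) :
    (∑ i, A i) *ᵥ w = ∑ i, A i *ᵥ w := by
  funext j
  simp only [Matrix.mulVec, dotProduct, Finset.sum_apply, Matrix.sum_apply,
    Finset.sum_mul]
  exact Finset.sum_comm

lemma edr_cross_swap (a b : V3) : cross3 a (cross3 a b) = -cross3 a (cross3 b a) := by
  ext j; fin_cases j <;> simp [cross3] <;> ring


/-- the instantaneous rate of change of the total energy along the
dynamics equals the (nonpositive) viscous dissipation rate. -/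
theorem energy_dissipation_rate (N : ℕ) (m k : Fin N → ℝ) (hm : ∀ i, 0 < m i)
    (hk : ∀ i, 0 < k i) (μ : ℝ) (hμ : 0 < μ) (y xt : Fin N → V3)
    (hcm : ∑ i, m i • xt i = 0)
    (M : ℝ) (hM : M = ∑ i, m i)
    (J : Matrix (Fin 3) (Fin 3) ℝ) (hJ : J = -∑ i, m i • (hat (xt i) * hat (xt i)))
    (p : V3) (R : Matrix (Fin 3) (Fin 3) ℝ) (v ω : V3) (hR : Rᵀ * R = 1)
    (f τ : V3)
    (hf : f = ∑ i, k i • (y i - act R (xt i) - p) - (μ * M) • v)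
    (hτ : τ = ∑ i, (k i • cross3 (xt i) (act Rᵀ (y i - p))
        - (μ * m i) • cross3 (xt i) (cross3 ω (xt i)))) :
    ⟪v, f⟫ + ⟪ω, τ - cross3 ω (act J ω)⟫
        + ∑ i, k i * ⟪y i - act R (xt i) - p, -act R (cross3 ω (xt i)) - v⟫
      = -(μ * M) * ‖v‖ ^ 2 - μ * ⟪ω, act J ω⟫
    ∧ -(μ * M) * ‖v‖ ^ 2 - μ * ⟪ω, act J ω⟫ ≤ 0 := by
  set e : Fin N → V3 := fun i => y i - act R (xt i) - p with he
  -- J acting on ω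
  have hJω : act J ω = ∑ i, m i • cross3 (xt i) (cross3 ω (xt i)) := by
    rw [hJ]
    show WithLp.toLp 2 ((-∑ i, m i • (hat (xt i) * hat (xt i))) *ᵥ ω) = _
    rw [Matrix.neg_mulVec, edr_sum_mulVec]
    rw [← Finset.sum_neg_distrib, WithLp.toLp_sum]
    refine Finset.sum_congr rfl fun i _ => ?_
    rw [Matrix.smul_mulVec]
    have : (hat (xt i) * hat (xt i)) *ᵥ ω = (cross3 (xt i) (cross3 (xt i) ω)).ofLp :=
      congrArg WithLp.ofLp (edr_hat2 _ _)
    rw [this, edr_cross_swap]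
    simp
  have hJq : ⟪ω, act J ω⟫ = ∑ i, m i * ⟪ω, cross3 (xt i) (cross3 ω (xt i))⟫ := by
    rw [hJω, inner_sum]
    exact Finset.sum_congr rfl fun i _ => real_inner_smul_right _ _ _
  have hD : ∀ i, ⟪ω, cross3 (xt i) (cross3 ω (xt i))⟫ = ‖cross3 ω (xt i)‖ ^ 2 := by
    intro i
    rw [edr_triple, real_inner_self_eq_norm_sq]
  have hA : ⟪v, f⟫ = (∑ i, k i * ⟪v, e i⟫) - μ * M * ‖v‖ ^ 2 := by
    rw [hf, inner_sub_right, inner_sum, real_inner_smul_right, real_inner_self_eq_norm_sq]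
    congr 1
    exact Finset.sum_congr rfl fun i _ => real_inner_smul_right _ _ _
  have hB : ⟪ω, τ - cross3 ω (act J ω)⟫
      = ∑ i, (k i * ⟪ω, cross3 (xt i) (act Rᵀ (y i - p))⟫
          - μ * m i * ⟪ω, cross3 (xt i) (cross3 ω (xt i))⟫) := by
    rw [inner_sub_right, edr_cross_left, sub_zero, hτ, inner_sum]
    refine Finset.sum_congr rfl fun i _ => ?_
    rw [inner_sub_right, real_inner_smul_right, real_inner_smul_right]
  have hP : ∀ i, k i * ⟪e i, -act R (cross3 ω (xt i)) - v⟫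
      = -(k i * ⟪ω, cross3 (xt i) (act Rᵀ (y i - p))⟫) - k i * ⟪v, e i⟫ := by
    intro i
    have h1 : ⟪e i, act R (cross3 ω (xt i))⟫ = ⟪ω, cross3 (xt i) (act Rᵀ (y i - p))⟫ := by
      have he2 : e i = (y i - p) - act R (xt i) := by simp [he]; abel
      rw [he2, inner_sub_left, edr_ortho hR, edr_cross_right, sub_zero, ← edr_adj]
      exact (edr_triple ω (xt i) (act Rᵀ (y i - p))).symm
    rw [inner_sub_right, inner_neg_right, h1, real_inner_comm (e i) v]
    ring
  constructor
  · rw [hA, hB, hJq]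
    have hsum : ∑ i, k i * ⟪e i, -act R (cross3 ω (xt i)) - v⟫
        = ∑ i, (-(k i * ⟪ω, cross3 (xt i) (act Rᵀ (y i - p))⟫) - k i * ⟪v, e i⟫) :=
      Finset.sum_congr rfl fun i _ => hP i
    rw [hsum]
    have hcomb : (∑ i, k i * ⟪v, e i⟫)
        + (∑ i, (k i * ⟪ω, cross3 (xt i) (act Rᵀ (y i - p))⟫
            - μ * m i * ⟪ω, cross3 (xt i) (cross3 ω (xt i))⟫))
        + (∑ i, (-(k i * ⟪ω, cross3 (xt i) (act Rᵀ (y i - p))⟫) - k i * ⟪v, e i⟫))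
        = -μ * ∑ i, m i * ⟪ω, cross3 (xt i) (cross3 ω (xt i))⟫ := by
      rw [← Finset.sum_add_distrib, ← Finset.sum_add_distrib, Finset.mul_sum]
      exact Finset.sum_congr rfl fun i _ => by ring
    linarith [hcomb]
  · rw [hJq]
    have h1 : 0 ≤ ∑ i, m i * ⟪ω, cross3 (xt i) (cross3 ω (xt i))⟫ :=
      Finset.sum_nonneg fun i _ => by
        rw [hD i]; exact mul_nonneg (hm i).le (sq_nonneg _)
    have h2 : 0 ≤ M := hM ▸ Finset.sum_nonneg fun i _ => (hm i).le
    nlinarith [mul_nonneg h2 (sq_nonneg ‖v‖), mul_nonneg hμ.le h1,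
      mul_nonneg hμ.le (mul_nonneg h2 (sq_nonneg ‖v‖))]
end
end

section
/- Let ω : ℝ → ℝ³ be continuous and let R : ℝ → ℝ^{3×3} be differentiable with Ṙ(t) = R(t)·(ω(t))̂ for all t, where â denotes the skew-symmetric matrix of a ∈ ℝ³. If R(0)ᵀ R(0) = I and det R(0) = 1, then R(t)ᵀ R(t) = I and det R(t) = 1 for all t; i.e., SO(3) is invariant under the kinematic equation Ṙ = R ω̂. -/
open Matrix Filter
open scoped RealInnerProductSpace

noncomputable section

attribute [local instance] Matrix.normedAddCommGroup Matrix.normedSpace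

open Set
open scoped NNReal

abbrev E3 := Matrix (Fin 3) (Fin 3) ℝ

lemma norm_mul_le3 (A B : E3) : ‖A * B‖ ≤ 3 * ‖A‖ * ‖B‖ := by
  have h : ∀ i j : Fin 3, ‖(A * B) i j‖ ≤ 3 * ‖A‖ * ‖B‖ := by
    intro i j
    have : (A * B) i j = ∑ k, A i k * B k j := by simp [Matrix.mul_apply]
    rw [this]
    calc ‖∑ k, A i k * B k j‖ ≤ ∑ k : Fin 3, ‖A i k * B k j‖ := norm_sum_le _ _
      _ ≤ ∑ k : Fin 3, ‖A‖ * ‖B‖ := by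
          refine Finset.sum_le_sum fun k _ => ?_
          rw [norm_mul]
          exact mul_le_mul (A.norm_entry_le_entrywise_sup_norm)
            (B.norm_entry_le_entrywise_sup_norm) (norm_nonneg _) (norm_nonneg _)
      _ = 3 * ‖A‖ * ‖B‖ := by simp [Fin.sum_univ_succ]; ring
  exact (Matrix.norm_le_iff (by positivity)).mpr h

lemma isBBM_mul : IsBoundedBilinearMap ℝ (fun p : E3 × E3 => p.1 * p.2) where
  add_left := fun x₁ x₂ y => add_mul x₁ x₂ y
  smul_left := fun c x y => smul_mul_assoc c x y
  add_right := fun x y₁ y₂ => mul_add x y₁ y₂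
  smul_right := fun c x y => mul_smul_comm c x y
  bound := ⟨3, by norm_num, fun x y => norm_mul_le3 x y⟩

lemma hasDerivAt_matmul {f g : ℝ → E3} {f' g' : E3} {t : ℝ}
    (hf : HasDerivAt f f' t) (hg : HasDerivAt g g' t) :
    HasDerivAt (fun s => f s * g s) (f' * g t + f t * g') t := by
  have h := (isBBM_mul.hasFDerivAt (f t, g t)).comp_hasDerivAt t (hf.prodMk hg)
  simp [add_comm] at h
  exact h

lemma hasDerivAt_transpose {f : ℝ → E3} {f' : E3} {t : ℝ} (hf : HasDerivAt f f' t) :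
    HasDerivAt (fun s => (f s)ᵀ) f'ᵀ t := by
  have L : E3 →L[ℝ] E3 :=
    LinearMap.toContinuousLinearMap (Matrix.transposeLinearEquiv (Fin 3) (Fin 3) ℝ ℝ).toLinearMap
  have h := (LinearMap.toContinuousLinearMap
    (Matrix.transposeLinearEquiv (Fin 3) (Fin 3) ℝ ℝ).toLinearMap).hasFDerivAt.comp_hasDerivAt
    t hf
  exact h

lemma hat_transpose (a : V3) : (hat a)ᵀ = -hat a := by
  unfold hat
  ext i j
  fin_cases i <;> fin_cases j <;> simp [Matrix.transpose_apply]

/-- SO(3) is invariant under the kinematic equation `Ṙ = R ω̂`. -/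
theorem SO3_invariant_under_kinematics (ω : ℝ → V3) (hω : Continuous ω)
    (R : ℝ → Matrix (Fin 3) (Fin 3) ℝ)
    (hR : ∀ t : ℝ, HasDerivAt R (R t * hat (ω t)) t)
    (h0 : (R 0)ᵀ * R 0 = 1) (hdet0 : (R 0).det = 1) :
    ∀ t : ℝ, (R t)ᵀ * R t = 1 ∧ (R t).det = 1 := by
  -- A := Rᵀ R and its derivative
  set A : ℝ → E3 := fun t => (R t)ᵀ * R t with hAdef
  have hA : ∀ t, HasDerivAt A (A t * hat (ω t) - hat (ω t) * A t) t := by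
    intro t
    have h := hasDerivAt_matmul (hasDerivAt_transpose (hR t)) (hR t)
    have e : (R t * hat (ω t))ᵀ * R t + (R t)ᵀ * (R t * hat (ω t))
        = A t * hat (ω t) - hat (ω t) * A t := by
      rw [Matrix.transpose_mul, hat_transpose]
      simp [hAdef, Matrix.mul_assoc, sub_eq_add_neg, add_comm]
    rwa [e] at h
  -- orthogonality for all t
  have key : ∀ t : ℝ, A t = 1 := by
    intro T
    rcases eq_or_ne T 0 with rfl | hT0
    · exact h0
    set a : ℝ := -(|T| + 1) with ha
    set b : ℝ := |T| + 1 with hb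
    have hb0 : (0:ℝ) < |T| + 1 := by positivity
    have hab : a ≤ b := by simp only [ha, hb]; linarith
    have h0mem : (0:ℝ) ∈ Ioo a b := by
      constructor <;> simp only [ha, hb] <;> linarith
    have hTmem : T ∈ Icc a b := by
      constructor <;> simp only [ha, hb] <;>
        cases abs_cases T with
        | inl h => linarith [h.1]
        | inr h => linarith [h.1]
    -- truncated ω and bound
    set H : ℝ → E3 := fun s => hat (ω (projIcc a b hab s)) with hHdef
    have hHcont : Continuous fun u : ℝ => hat (ω u) := by
      have hcoord : ∀ i : Fin 3, Continuous fun u : ℝ => ω u i := fun i =>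
        ((EuclideanSpace.proj i : V3 →L[ℝ] ℝ).continuous).comp hω
      unfold hat
      refine continuous_matrix fun i j => ?_
      fin_cases i <;> fin_cases j <;>
        simp only [Matrix.cons_val', Matrix.cons_val_zero, Matrix.cons_val_one, Matrix.head_cons,
          Matrix.empty_val', Matrix.cons_val_fin_one, Matrix.head_fin_const] <;>
        first
          | exact continuous_const
          | exact hcoord _
          | exact (hcoord _).neg
    obtain ⟨u₀, -, hu₀⟩ := (isCompact_Icc (a := a) (b := b)).exists_isMaxOn
      (nonempty_Icc.mpr hab)
      ((hHcont.comp continuous_id).norm.continuousOn)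
    set C : ℝ := max ‖hat (ω u₀)‖ 0 with hCdef
    have hC0 : 0 ≤ C := le_max_right _ _
    have hHbound : ∀ s : ℝ, ‖H s‖ ≤ C := by
      intro s
      exact le_max_of_le_left (hu₀ (projIcc a b hab s).2)
    -- the vector field
    set v : ℝ → E3 → E3 := fun s X => X * H s - H s * X with hvdef
    have hlip : ∀ s : ℝ, LipschitzWith (6 * C).toNNReal (v s) := by
      intro s
      refine LipschitzWith.of_dist_le_mul fun X Y => ?_
      rw [dist_eq_norm, dist_eq_norm]
      have e : v s X - v s Y = (X - Y) * H s - H s * (X - Y) := by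
        simp only [hvdef]
        rw [sub_mul, mul_sub]
        abel
      rw [e]
      have h1 : ‖(X - Y) * H s - H s * (X - Y)‖
          ≤ ‖(X - Y) * H s‖ + ‖H s * (X - Y)‖ := norm_sub_le _ _
      have h2 := norm_mul_le3 (X - Y) (H s)
      have h3 := norm_mul_le3 (H s) (X - Y)
      have h4 := hHbound s
      have h5 : (0:ℝ) ≤ ‖X - Y‖ := norm_nonneg _
      have hcoe : ((6 * C).toNNReal : ℝ) = 6 * C :=
        Real.coe_toNNReal _ (by linarith)
      rw [hcoe]
      nlinarith [norm_nonneg (H s)]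
    -- apply uniqueness
    have hAcont : Continuous A :=
      continuous_iff_continuousAt.mpr fun s => (hA s).continuousAt
    have heq : EqOn A (fun _ => (1 : E3)) (Icc a b) := by
      refine ODE_solution_unique_of_mem_Icc
        (v := v) (s := fun _ => Set.univ) (K := (6 * C).toNNReal)
        (fun s _ => (hlip s).lipschitzOnWith) h0mem hAcont.continuousOn
        (fun s hs => ?_) (fun _ _ => trivial) continuousOn_const
        (fun s hs => ?_) (fun _ _ => trivial) (by simpa using h0)
      · have hHs : H s = hat (ω s) := by
          simp only [hHdef, projIcc_of_mem hab (Ioo_subset_Icc_self hs)]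
        rw [hvdef]
        simp only [hHs]
        exact hA s
      · have : v s (1 : E3) = 0 := by simp [hvdef]
        rw [this]
        exact hasDerivAt_const s 1
    exact heq hTmem
  intro t
  refine ⟨key t, ?_⟩
  -- determinant
  have hsq : ∀ s : ℝ, (R s).det * (R s).det = 1 := by
    intro s
    have := congrArg Matrix.det (key s)
    rwa [Matrix.det_mul, Matrix.det_transpose, Matrix.det_one] at this
  have hRcont : Continuous R := by
    refine continuous_iff_continuousAt.mpr fun s => (hR s).continuousAt
  have hdcont : Continuous fun s => (R s).det := hRcont.matrix_det
  by_contra hne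
  have hneg : (R t).det = -1 := by
    rcases mul_self_eq_one_iff.mp (hsq t) with h | h
    · exact absurd h hne
    · exact h
  have h0mem : (0 : ℝ) ∈ uIcc ((R 0).det) ((R t).det) := by
    rw [hdet0, hneg]
    constructor <;> simp [inf_le_iff, le_sup_iff]
  obtain ⟨s, _, hs⟩ := intermediate_value_uIcc (hdcont.continuousOn) h0mem
  have := hsq s
  rw [show (R s).det = 0 from hs] at this
  norm_num at this
end
end

section
/- Let y₁,…,y_N, x̃₁,…,x̃_N ∈ ℝ³ with Σᵢ mᵢ x̃ᵢ = 0 and Σᵢ mᵢ yᵢ = 0, masses mᵢ > 0, spring constants kᵢ = 2 mᵢ, total mass M = Σᵢ mᵢ, μ > 0, and suppose J = −Σᵢ mᵢ (x̃ᵢ)̂² is invertible. Then a state s = (p, R, v, ω) with R ∈ SO(3) is an equilibrium of the dynamics (ṗ = v, Ṙ = R ω̂, M v̇ = f(s), J ω̇ = τ(s) − ω × J ω, with f and τ the total force and torque) if and only if v = 0, ω = 0, p = 0, and Σᵢ kᵢ x̃ᵢ × (Rᵀ yᵢ) = 0. In particular, at every equilibrium the center of mass of the moving cloud coincides with the (weighted)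 center of mass of the static cloud. -/
open Matrix Filter
open scoped RealInnerProductSpace

noncomputable section

lemma cross3_zero_left (b : V3) : cross3 0 b = 0 := by
  ext i; fin_cases i <;> simp [cross3]

lemma cross3_zero_right (a : V3) : cross3 a 0 = 0 := by
  ext i; fin_cases i <;> simp [cross3]

lemma hat_zero : hat (0 : V3) = 0 := by
  ext i j; fin_cases i <;> fin_cases j <;> simp [hat, Matrix.vecHead, Matrix.vecTail]

lemma eq_zero_of_hat_eq_zero (ω : V3) (h : hat ω = 0) : ω = 0 := by
  ext i
  fin_cases i
  · simpa [hat] using congrFun (congrFun h 2) 1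
  · simpa [hat] using congrFun (congrFun h 0) 2
  · simpa [hat] using congrFun (congrFun h 1) 0

/-- characterization of the equilibrium points of the registration
dynamics: a state `(p, R, v, ω)` with `R ∈ SO(3)` is an equilibrium iff `v = 0`,
`ω = 0`, `p = 0` (the centers of mass coincide) and the total spring torque
`∑ kᵢ x̃ᵢ × (Rᵀ yᵢ)` vanishes. -/
theorem equilibrium_characterization (N : ℕ) (m k : Fin N → ℝ)
    (hm : ∀ i, 0 < m i) (hkm : ∀ i, k i = 2 * m i) (μ : ℝ) (hμ : 0 < μ)
    (y xt : Fin N → V3) (hcm : ∑ i, m i • xt i = 0) (hycm : ∑ i, m i • y i = 0)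
    (M : ℝ) (hM : M = ∑ i, m i)
    (J : Matrix (Fin 3) (Fin 3) ℝ) (hJ : J = -∑ i, m i • (hat (xt i) * hat (xt i)))
    (hJinv : IsUnit J)
    (p : V3) (R : Matrix (Fin 3) (Fin 3) ℝ) (v ω : V3) (hR : isSO3 R) :
    (v = 0
      ∧ R * hat ω = 0
      ∧ (∑ i, k i • (y i - act R (xt i) - p)) - (μ * M) • v = 0
      ∧ (∑ i, (k i • cross3 (xt i) (act Rᵀ (y i - p))
          - (μ * m i) • cross3 (xt i) (cross3 ω (xt i)))) - cross3 ω (act J ω) = 0)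
    ↔ (v = 0 ∧ ω = 0 ∧ p = 0 ∧ ∑ i, k i • cross3 (xt i) (act Rᵀ (y i)) = 0) := by

  have hk2 : ∀ (w : Fin N → V3), (∑ i, m i • w i = 0) → ∑ i, k i • w i = 0 := by
    intro w hw
    calc ∑ i, k i • w i = ∑ i, (2:ℝ) • (m i • w i) :=
          Finset.sum_congr rfl (fun i _ => by rw [hkm i, mul_smul])
      _ = (2:ℝ) • ∑ i, m i • w i := (Finset.smul_sum).symm
      _ = 0 := by rw [hw, smul_zero]
  have sumky : ∑ i, k i • y i = 0 := hk2 y hycm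
  have sumkxt : ∑ i, k i • xt i = 0 := hk2 xt hcm
  have sumkRxt : ∑ i, k i • act R (xt i) = 0 := by
    have : ∑ i, k i • act R (xt i) = Matrix.toEuclideanLin R (∑ i, k i • xt i) := by
      rw [map_sum]
      simp [act, Matrix.toEuclideanLin_apply]
    rw [this, sumkxt, map_zero]
  have hMpos : (0:ℝ) < M := by
    rw [hM]
    rcases Nat.eq_zero_or_pos N with h0 | h0
    · exfalso
      subst h0
      rw [show J = 0 by simpa using hJ] at hJinv
      exact hJinv.ne_zero rfl
    · exact Finset.sum_pos (fun i _ => hm i) (by simp [Finset.univ_nonempty_iff, ← Fin.pos_iff_nonempty, h0])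
  have hsumk : ∑ i, k i = 2 * M := by
    rw [hM, Finset.mul_sum]
    exact Finset.sum_congr rfl (fun i _ => hkm i)
  constructor
  · rintro ⟨hv, hRw, hf, hτ⟩
    have hhat : hat ω = 0 := by
      have h1 : Rᵀ * (R * hat ω) = 0 := by rw [hRw, mul_zero]
      rwa [← mul_assoc, hR.1, one_mul] at h1
    have hω : ω = 0 := eq_zero_of_hat_eq_zero ω hhat
    have hp : p = 0 := by
      rw [hv, smul_zero, sub_zero] at hf
      have hexp : ∑ i, k i • (y i - act R (xt i) - p)
          = (∑ i, k i • y i) - (∑ i, k i • act R (xt i)) - (∑ i, k i) • p := by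
        simp_rw [smul_sub, Finset.sum_sub_distrib, ← Finset.sum_smul]
      rw [hexp, sumky, sumkRxt, sub_zero, zero_sub, neg_eq_zero] at hf
      rcases smul_eq_zero.mp hf with h | h
      · exfalso; rw [hsumk] at h; nlinarith
      · exact h
    refine ⟨hv, hω, hp, ?_⟩
    rw [hω, hp] at hτ
    simpa [cross3_zero_left, cross3_zero_right, act, Matrix.mulVec_zero] using hτ
  · rintro ⟨hv, hω, hp, hτ⟩
    subst hv hω hp
    refine ⟨rfl, by rw [hat_zero, mul_zero], ?_, ?_⟩
    · have hexp : ∑ i, k i • (y i - act R (xt i) - (0:V3))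
          = (∑ i, k i • y i) - (∑ i, k i • act R (xt i)) := by
        simp_rw [sub_zero, smul_sub, Finset.sum_sub_distrib]
      rw [hexp, sumky, sumkRxt, sub_zero, smul_zero, sub_zero]
    · simpa [cross3_zero_left, cross3_zero_right, act, Matrix.mulVec_zero] using hτ
end
end

section
/- (Global invariant set theorem.) Let F : ℝⁿ → ℝⁿ be locally Lipschitz and V : ℝⁿ → ℝ be continuously differentiable such that (i) V(x) → ∞ as ‖x‖ → ∞, and (ii) ⟨∇V(x), F(x)⟩ ≤ 0 for all x ∈ ℝⁿ. Then for every initial condition x₀ ∈ ℝⁿ, the solution x(·) of ẋ = F(x), x(0) = x₀ exists for all t ≥ 0 and is bounded, and its ω-limit set is nonempty, compact, invariant under the flow of F, and contained in the set R = {x ∈ ℝⁿ : ⟨∇V(x), F(x)⟩ = 0}; consequently x(t) converges to the largest invariant set contained in R, i.e., dist(x(t), that set) → 0 as t → ∞. -/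
open Filter Metric
open scoped RealInnerProductSpace Topology

noncomputable section

/-- A set `I` is invariant for the flow of `ẋ = F(x)` if every solution starting in
`I` remains in `I` for all future time. -/
def IsFlowInvariant {n : ℕ} (F : EuclideanSpace ℝ (Fin n) → EuclideanSpace ℝ (Fin n))
    (I : Set (EuclideanSpace ℝ (Fin n))) : Prop :=
  ∀ x : ℝ → EuclideanSpace ℝ (Fin n),
    (∀ t, 0 ≤ t → HasDerivAt x (F (x t)) t) → x 0 ∈ I → ∀ t, 0 ≤ t → x t ∈ I

/-- The ω-limit set of a trajectory: all limits of `x (t k)` along sequences `t k → ∞`. -/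
def omegaLimitSet {n : ℕ} (x : ℝ → EuclideanSpace ℝ (Fin n)) :
    Set (EuclideanSpace ℝ (Fin n)) :=
  {a | ∃ u : ℕ → ℝ, Tendsto u atTop atTop ∧ Tendsto (fun k => x (u k)) atTop (𝓝 a)}

variable {n : ℕ}
local notation "E" => EuclideanSpace ℝ (Fin n)
open scoped NNReal

lemma exists_lipschitzOnWith_of_isCompact {α β : Type*} [MetricSpace α] [MetricSpace β]
    {f : α → β} (hf : LocallyLipschitz f) {s : Set α} (hs : IsCompact s) :
    ∃ K : ℝ≥0, LipschitzOnWith K f s := by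
  have hcont := hf.continuous
  choose Kf tf htf hlip using hf
  obtain ⟨I, hIs, hIcov⟩ := hs.elim_nhds_subcover (fun x => interior (tf x))
      (fun x _ => interior_mem_nhds.2 (htf x))
  have hcov : s ⊆ ⋃ i : I, interior (tf i) := by
    intro a ha
    obtain ⟨x, hx⟩ := Set.mem_iUnion.1 (hIcov ha)
    simp only [Set.mem_iUnion] at hx ⊢
    obtain ⟨hxI, hax⟩ := hx
    exact ⟨⟨x, hxI⟩, hax⟩
  obtain ⟨δ, hδ, hball⟩ := lebesgue_number_lemma_of_metric hs (fun i => isOpen_interior) hcov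
  obtain ⟨C, hC⟩ := Metric.isBounded_iff.1 (hs.image hcont).isBounded
  set Kmax : ℝ≥0 := I.sup Kf with hKmax
  set Kc : ℝ≥0 := ⟨max C 0, le_max_right _ _⟩ / ⟨δ, hδ.le⟩ with hKc
  refine ⟨Kmax ⊔ Kc, LipschitzOnWith.of_dist_le_mul fun a ha b hb => ?_⟩
  rcases lt_or_ge (dist a b) δ with h | h
  · obtain ⟨i, hi⟩ := hball a ha
    have hb' : b ∈ tf i := interior_subset (hi (by simpa [Metric.mem_ball, dist_comm] using h))
    have ha' : a ∈ tf i := interior_subset (hi (Metric.mem_ball_self hδ))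
    calc dist (f a) (f b) ≤ Kf i * dist a b := (hlip i).dist_le_mul a ha' b hb'
      _ ≤ (Kmax ⊔ Kc) * dist a b := by
          gcongr
          exact_mod_cast le_sup_of_le_left (Finset.le_sup (f := Kf) i.2)
  · have h1 : dist (f a) (f b) ≤ max C 0 :=
      le_max_of_le_left (hC (Set.mem_image_of_mem f ha) (Set.mem_image_of_mem f hb))
    have h2 : (Kc : ℝ) = max C 0 / δ := rfl
    calc dist (f a) (f b) ≤ max C 0 := h1
      _ = (max C 0 / δ) * δ := by field_simp
      _ ≤ (Kc : ℝ) * dist a b := by rw [h2]; gcongr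
      _ ≤ ((Kmax ⊔ Kc : ℝ≥0) : ℝ) * dist a b := by
          gcongr
          exact_mod_cast le_sup_right

lemma gradient_chain {V : E → ℝ} (hV : ContDiff ℝ 1 V) {y : ℝ → E} {v : E} {t : ℝ}
    (hy : HasDerivAt y v t) :
    HasDerivAt (fun s => V (y s)) ⟪gradient V (y t), v⟫ t := by
  have h1 : HasGradientAt V (gradient V (y t)) (y t) :=
    (hV.differentiable one_ne_zero (y t)).hasGradientAt
  have h2 := hasGradientAt_iff_hasFDerivAt.1 h1
  simpa [InnerProductSpace.toDual_apply_apply, Function.comp_def] using h2.comp_hasDerivAt t hy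

lemma antitoneOn_V_comp {V : E → ℝ} (hV : ContDiff ℝ 1 V) {y w : ℝ → E}
    (hy : ∀ t ∈ Set.Ici (0:ℝ), HasDerivAt y (w t) t)
    (hw : ∀ t ∈ Set.Ici (0:ℝ), ⟪gradient V (y t), w t⟫ ≤ 0) :
    AntitoneOn (fun t => V (y t)) (Set.Ici 0) := by
  have hioi : interior (Set.Ici (0:ℝ)) = Set.Ioi 0 := interior_Ici
  apply antitoneOn_of_deriv_nonpos (convex_Ici 0)
  · exact fun t ht => ((gradient_chain hV (hy t ht)).continuousAt).continuousWithinAt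
  · rw [hioi]
    exact fun t ht =>
      ((gradient_chain hV (hy t (Set.mem_Ici.2 (le_of_lt ht)))).differentiableAt).differentiableWithinAt
  · rw [hioi]
    intro t ht
    rw [(gradient_chain hV (hy t (Set.mem_Ici.2 (le_of_lt ht)))).deriv]
    exact hw t (Set.mem_Ici.2 (le_of_lt ht))

lemma isCompact_sublevel {V : E → ℝ} (hV : Continuous V)
    (hcoercive : Tendsto V (cocompact E) atTop) (c : ℝ) :
    IsCompact {a : E | V a ≤ c} := by
  have hmem : {x : E | c + 1 ≤ V x} ∈ cocompact E :=
    hcoercive.eventually (eventually_ge_atTop (c+1))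
  obtain ⟨K, hK, hKs⟩ := Filter.mem_cocompact.1 hmem
  refine hK.of_isClosed_subset (isClosed_le hV continuous_const) ?_
  intro a ha
  by_contra haK
  have : c + 1 ≤ V a := hKs haK
  simp only [Set.mem_setOf_eq] at ha
  linarith

lemma exists_truncation (F : E → E) (hF : LocallyLipschitz F)
    (V : E → ℝ) (hV : ContDiff ℝ 1 V)
    (hcoercive : Tendsto V (cocompact E) atTop)
    (hdissip : ∀ a, ⟪gradient V a, F a⟫ ≤ 0) (x₀ : E) :
    ∃ (K : ℝ≥0) (G : E → E), LipschitzWith K G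
      ∧ (∀ a, V a ≤ V x₀ → G a = F a)
      ∧ (∀ a, ⟪gradient V a, G a⟫ ≤ 0)
      ∧ (∃ x : ℝ → E, x 0 = x₀ ∧ ∀ t : ℝ, HasDerivAt x (G (x t)) t) := by
  classical
  set S : Set E := {a : E | V a ≤ V x₀} with hSdef
  have hS : IsCompact S := isCompact_sublevel hV.continuous hcoercive _
  have hSne : S.Nonempty := ⟨x₀, show V x₀ ≤ V x₀ from le_refl _⟩
  set T : Set E := cthickening 1 S with hTdef
  have hT : IsCompact T := hS.cthickening
  have hST : S ⊆ T := self_subset_cthickening S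
  have hTne : T.Nonempty := hSne.mono hST
  obtain ⟨L, hLF⟩ := exists_lipschitzOnWith_of_isCompact hF hT
  obtain ⟨a₀, _, hMmax⟩ := hT.exists_isMaxOn hTne
    ((continuous_norm.comp hF.continuous).continuousOn)
  set M : ℝ := ‖F a₀‖ with hMdef
  have hM : ∀ a ∈ T, ‖F a‖ ≤ M := fun a ha => hMmax ha
  have hM0 : 0 ≤ M := norm_nonneg _
  set ρ : E → ℝ := fun a => max (1 - infDist a S) 0 with hρdef
  have hρ0 : ∀ a, 0 ≤ ρ a := fun a => le_max_right _ _
  have hρ1 : ∀ a, ρ a ≤ 1 := fun a =>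
    max_le (by linarith [infDist_nonneg (s := S) (x := a)]) zero_le_one
  have hρS : ∀ a ∈ S, ρ a = 1 := by
    intro a ha
    simp [hρdef, infDist_zero_of_mem ha]
  have hρT : ∀ a, a ∉ T → ρ a = 0 := by
    intro a ha
    have h1 : ¬ infDist a S < 1 := by
      intro hlt
      exact ha (thickening_subset_cthickening 1 S ((mem_thickening_iff_infDist_lt hSne).2 hlt))
    push_neg at h1
    simp only [hρdef]
    exact max_eq_right (by linarith)
  have hρlip : ∀ a b : E, |ρ a - ρ b| ≤ dist a b := by
    intro a b
    calc |ρ a - ρ b| ≤ |(1 - infDist a S) - (1 - infDist b S)| :=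
          abs_max_sub_max_le_abs _ _ _
      _ = |infDist b S - infDist a S| := by ring_nf
      _ ≤ dist b a := by
          have := (lipschitz_infDist_pt S).dist_le_mul b a
          rwa [Real.dist_eq, NNReal.coe_one, one_mul] at this
      _ = dist a b := dist_comm _ _
  set G : E → E := fun a => ρ a • F a with hGdef
  have hGS : ∀ a, V a ≤ V x₀ → G a = F a := by
    intro a ha
    simp [hGdef, hρS a ha]
  have hGbound : ∀ a, ‖G a‖ ≤ M := by
    intro a
    by_cases ha : a ∈ T
    · calc ‖G a‖ = ρ a * ‖F a‖ := by
            simp [hGdef, norm_smul, abs_of_nonneg (hρ0 a)]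
      _ ≤ 1 * M := mul_le_mul (hρ1 a) (hM a ha) (norm_nonneg _) zero_le_one
      _ = M := one_mul M
    · simp [hGdef, hρT a ha, hM0]
  have hGdissip : ∀ a, ⟪gradient V a, G a⟫ ≤ 0 := by
    intro a
    have : ⟪gradient V a, G a⟫ = ρ a * ⟪gradient V a, F a⟫ := real_inner_smul_right _ _ _
    rw [this]
    have := mul_le_mul_of_nonneg_left (hdissip a) (hρ0 a)
    simpa using this
  have hGlipb : ∀ a b : E, ‖G a - G b‖ ≤ ((L : ℝ) + M) * dist a b := by
    have key : ∀ a b : E, a ∈ T → ‖G a - G b‖ ≤ ((L : ℝ) + M) * dist a b := by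
      intro a b haT
      by_cases hbT : b ∈ T
      · have h1 : G a - G b = ρ a • (F a - F b) + (ρ a - ρ b) • F b := by
          simp only [hGdef, smul_sub, sub_smul]
          abel
        calc ‖G a - G b‖ ≤ ‖ρ a • (F a - F b)‖ + ‖(ρ a - ρ b) • F b‖ := by
              rw [h1]; exact norm_add_le _ _
          _ = ρ a * ‖F a - F b‖ + |ρ a - ρ b| * ‖F b‖ := by
              rw [norm_smul, norm_smul, Real.norm_eq_abs, Real.norm_eq_abs,
                abs_of_nonneg (hρ0 a)]
          _ ≤ 1 * ((L : ℝ) * dist a b) + dist a b * M := by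
              have h2 : ‖F a - F b‖ ≤ (L : ℝ) * dist a b := by
                have := hLF.dist_le_mul a haT b hbT
                rwa [dist_eq_norm] at this
              have h3 := hρlip a b
              have h4 := hM b hbT
              have h5 : ρ a * ‖F a - F b‖ ≤ 1 * ((L : ℝ) * dist a b) :=
                mul_le_mul (hρ1 a) h2 (norm_nonneg _) zero_le_one
              have h6 : |ρ a - ρ b| * ‖F b‖ ≤ dist a b * M :=
                mul_le_mul h3 h4 (norm_nonneg _) dist_nonneg
              linarith
          _ = ((L : ℝ) + M) * dist a b := by ring
      · have hb0 : G b = 0 := by simp [hGdef, hρT b hbT]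
        have ha' : ‖G a‖ = ρ a * ‖F a‖ := by
          simp [hGdef, norm_smul, abs_of_nonneg (hρ0 a)]
        have h7 : ρ a = |ρ a - ρ b| := by
          rw [hρT b hbT, sub_zero, abs_of_nonneg (hρ0 a)]
        calc ‖G a - G b‖ = ρ a * ‖F a‖ := by rw [hb0, sub_zero, ha']
          _ ≤ dist a b * M := by
              rw [h7]
              exact mul_le_mul (hρlip a b) (hM a haT) (norm_nonneg _) dist_nonneg
          _ ≤ ((L : ℝ) + M) * dist a b := by
              have hL0 : (0:ℝ) ≤ L := L.coe_nonneg
              nlinarith [dist_nonneg (x := a) (y := b)]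
    intro a b
    by_cases haT : a ∈ T
    · exact key a b haT
    · by_cases hbT : b ∈ T
      · rw [norm_sub_rev, dist_comm]; exact key b a hbT
      · have hL0 : (0:ℝ) ≤ L := L.coe_nonneg
        simp only [hGdef, hρT a haT, hρT b hbT, zero_smul, sub_zero, norm_zero]
        exact mul_nonneg (by linarith) dist_nonneg
  set Knn : ℝ≥0 := L + ⟨M, hM0⟩ with hKnn
  have hGlip : LipschitzWith Knn G := by
    apply LipschitzWith.of_dist_le_mul
    intro a b
    rw [dist_eq_norm]
    have : ((Knn : ℝ)) = (L : ℝ) + M := rfl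
    rw [this]
    exact hGlipb a b
  refine ⟨Knn, G, hGlip, hGS, hGdissip, ?_⟩
  -- Picard–Lindelöf on each interval [-(N+1), N+1]
  have hPL : ∀ N : ℕ, IsPicardLindelof (fun _ a => G a) (tmin := -((N:ℝ)+1)) (tmax := (N:ℝ)+1)
      ⟨0, Set.mem_Icc.2 ⟨by linarith [(Nat.cast_nonneg N : (0:ℝ) ≤ N)],
        by linarith [(Nat.cast_nonneg N : (0:ℝ) ≤ N)]⟩⟩ x₀
      ⟨(M+1)*((N:ℝ)+1), mul_nonneg (by linarith [hM0]) (by positivity)⟩ 0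
      ⟨M+1, by linarith [hM0]⟩ Knn := by
    intro N
    have hN : (0:ℝ) ≤ (N:ℝ) := Nat.cast_nonneg N
    refine ⟨fun t _ => hGlip.lipschitzOnWith, fun a _ => continuousOn_const,
      fun t _ a _ => show ‖G a‖ ≤ M + 1 by linarith [hGbound a], ?_⟩
    have h1 : max (((N:ℝ)+1) - 0) (0 - (-((N:ℝ)+1))) = (N:ℝ)+1 := by
      rw [show ((N:ℝ)+1) - 0 = (N:ℝ)+1 by ring, show (0:ℝ) - (-((N:ℝ)+1)) = (N:ℝ)+1 by ring,
        max_self]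
    show (M+1) * max (((N:ℝ)+1) - 0) (0 - (-((N:ℝ)+1))) ≤ (M+1)*((N:ℝ)+1) - ((0:ℝ≥0):ℝ)
    rw [h1, NNReal.coe_zero, sub_zero]
  choose f hf0' hfderiv using fun N : ℕ =>
    (hPL N).exists_eq_forall_mem_Icc_hasDerivWithinAt₀
  have hf0 : ∀ N : ℕ, f N 0 = x₀ := hf0'
  have hfderiv' : ∀ (N : ℕ), ∀ t ∈ Set.Ioo (-((N:ℝ)+1)) ((N:ℝ)+1),
      HasDerivAt (f N) (G (f N t)) t := fun N t ht =>
    (hfderiv N t (Set.Ioo_subset_Icc_self ht)).hasDerivAt (Icc_mem_nhds ht.1 ht.2)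
  have hfcont : ∀ N : ℕ, ContinuousOn (f N) (Set.Icc (-((N:ℝ)+1)) ((N:ℝ)+1)) :=
    fun N t ht => (hfderiv N t ht).continuousWithinAt
  have agree : ∀ (N M' : ℕ) (t : ℝ), |t| ≤ (N:ℝ)+1 → |t| ≤ (M':ℝ)+1 → f N t = f M' t := by
    intro N M' t htN htM
    set m : ℕ := min N M' with hm
    have hmN : (m:ℝ) ≤ (N:ℝ) := Nat.cast_le.2 (min_le_left _ _)
    have hmM : (m:ℝ) ≤ (M':ℝ) := Nat.cast_le.2 (min_le_right _ _)
    have hm0 : (0:ℝ) ≤ (m:ℝ) := Nat.cast_nonneg m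
    have hsubN : Set.Ioo (-((m:ℝ)+1)) ((m:ℝ)+1) ⊆ Set.Ioo (-((N:ℝ)+1)) ((N:ℝ)+1) :=
      Set.Ioo_subset_Ioo (by linarith) (by linarith)
    have hsubM : Set.Ioo (-((m:ℝ)+1)) ((m:ℝ)+1) ⊆ Set.Ioo (-((M':ℝ)+1)) ((M':ℝ)+1) :=
      Set.Ioo_subset_Ioo (by linarith) (by linarith)
    have heq := ODE_solution_unique_of_mem_Icc (v := fun _ a => G a)
      (s := fun _ => Set.univ) (K := Knn)
      (fun _ _ => hGlip.lipschitzOnWith)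
      (show (0:ℝ) ∈ Set.Ioo (-((m:ℝ)+1)) ((m:ℝ)+1) from ⟨by linarith, by linarith⟩)
      ((hfcont N).mono (Set.Icc_subset_Icc (by linarith) (by linarith)))
      (fun t ht => hfderiv' N t (hsubN ht)) (fun _ _ => trivial)
      ((hfcont M').mono (Set.Icc_subset_Icc (by linarith) (by linarith)))
      (fun t ht => hfderiv' M' t (hsubM ht)) (fun _ _ => trivial)
      ((hf0 N).trans (hf0 M').symm)
    have htm : |t| ≤ (m:ℝ)+1 := by
      rcases min_cases N M' with ⟨h1, _⟩ | ⟨h1, _⟩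
      · rw [hm, h1]; exact htN
      · rw [hm, h1]; exact htM
    exact heq (Set.mem_Icc.2 (abs_le.1 htm))
  -- glue
  set x : ℝ → E := fun t => f (⌈|t|⌉₊) t with hxdef
  have hx_eq : ∀ (N : ℕ) (s : ℝ), |s| ≤ (N:ℝ)+1 → x s = f N s := by
    intro N s hs
    exact agree (⌈|s|⌉₊) N s (le_trans (Nat.le_ceil _) (by linarith)) hs
  have hx0 : x 0 = x₀ := by
    have h0 : x 0 = f 0 0 := hx_eq 0 0 (by norm_num)
    rw [h0, hf0 0]
  refine ⟨x, hx0, ?_⟩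
  intro t
  set N : ℕ := ⌈|t|⌉₊ with hN
  have htN : |t| ≤ (N:ℝ) := Nat.le_ceil _
  have htN' : |t| < (N:ℝ)+1 := lt_of_le_of_lt htN (by linarith)
  have h1 : HasDerivAt (f N) (G (f N t)) t :=
    hfderiv' N t ⟨(abs_lt.1 htN').1, (abs_lt.1 htN').2⟩
  have hev : ∀ᶠ s in 𝓝 t, |s| < (N:ℝ)+1 :=
    continuous_abs.continuousAt.eventually_lt continuousAt_const htN'
  have heq : x =ᶠ[𝓝 t] f N := hev.mono fun s hs => hx_eq N s hs.le
  have h2 : HasDerivAt x (G (f N t)) t := h1.congr_of_eventuallyEq heq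
  rwa [← hx_eq N t htN'.le] at h2

lemma omega_eq (x : ℝ → E) :
    omegaLimitSet x = ⋂ T : ℝ, closure (x '' Set.Ici T) := by
  ext a
  constructor
  · rintro ⟨u, hu, hconv⟩
    rw [Set.mem_iInter]
    intro T
    refine mem_closure_of_tendsto hconv ?_
    exact (hu.eventually_ge_atTop T).mono fun k hk => ⟨u k, hk, rfl⟩
  · intro ha
    rw [Set.mem_iInter] at ha
    have h : ∀ k : ℕ, ∃ t : ℝ, t ≥ (k:ℝ) ∧ dist (x t) a < 1/((k:ℝ)+1) := by
      intro k
      have := Metric.mem_closure_iff.1 (ha (k:ℝ)) (1/((k:ℝ)+1)) (by positivity)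
      obtain ⟨b, ⟨t, ht, rfl⟩, hb⟩ := this
      exact ⟨t, ht, by rwa [dist_comm]⟩
    choose u hu hud using h
    refine ⟨u, tendsto_atTop_mono hu tendsto_natCast_atTop_atTop, ?_⟩
    refine tendsto_iff_dist_tendsto_zero.2 (squeeze_zero (fun k => dist_nonneg)
      (fun k => (hud k).le) ?_)
    exact tendsto_one_div_add_atTop_nhds_zero_nat

lemma omega_closed (x : ℝ → E) : IsClosed (omegaLimitSet x) := by
  rw [omega_eq]; exact isClosed_iInter fun _ => isClosed_closure

lemma omega_subset_closure (x : ℝ → E) :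
    omegaLimitSet x ⊆ closure (x '' Set.Ici 0) := by
  rw [omega_eq]; exact Set.iInter_subset _ 0

lemma omega_nonempty {x : ℝ → E} {S : Set E} (hS : IsCompact S)
    (hx : ∀ t : ℝ, 0 ≤ t → x t ∈ S) : (omegaLimitSet x).Nonempty := by
  obtain ⟨a, haS, φ, hφ, hconv⟩ := hS.tendsto_subseq
    (x := fun k : ℕ => x k) (fun k => hx k (Nat.cast_nonneg k))
  refine ⟨a, fun k => ((φ k : ℕ) : ℝ), ?_, hconv⟩
  exact tendsto_natCast_atTop_atTop.comp hφ.tendsto_atTop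

lemma omega_dist_tendsto {x : ℝ → E} {S : Set E} (hS : IsCompact S)
    (hx : ∀ t : ℝ, 0 ≤ t → x t ∈ S) :
    Tendsto (fun t => infDist (x t) (omegaLimitSet x)) atTop (𝓝 0) := by
  by_contra hcon
  rw [Metric.tendsto_atTop] at hcon
  push_neg at hcon
  obtain ⟨ε, hε, hfr⟩ := hcon
  have h : ∀ k : ℕ, ∃ t : ℝ, t ≥ (k:ℝ) ∧ ε ≤ dist (infDist (x t) (omegaLimitSet x)) 0 := by
    intro k
    obtain ⟨t, ht, h2⟩ := hfr (k:ℝ)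
    exact ⟨t, ht, h2⟩
  choose u hu hud using h
  have hu' : Tendsto u atTop atTop := tendsto_atTop_mono hu tendsto_natCast_atTop_atTop
  have hu0 : ∀ k, (0:ℝ) ≤ u k := fun k => le_trans (Nat.cast_nonneg k) (hu k)
  obtain ⟨a, haS, φ, hφ, hconv⟩ := hS.tendsto_subseq
    (x := fun k : ℕ => x (u k)) (fun k => hx (u k) (hu0 k))
  have haΩ : a ∈ omegaLimitSet x := ⟨u ∘ φ, hu'.comp hφ.tendsto_atTop, hconv⟩
  have hlim : Tendsto (fun k => dist (x (u (φ k))) a) atTop (𝓝 0) :=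
    tendsto_iff_dist_tendsto_zero.1 hconv
  have hev := hlim.eventually (eventually_lt_nhds hε : ∀ᶠ r in 𝓝 (0:ℝ), r < ε)
  obtain ⟨k, hk⟩ := hev.exists
  have h1 : infDist (x (u (φ k))) (omegaLimitSet x) ≤ dist (x (u (φ k))) a :=
    infDist_le_dist_of_mem haΩ
  have h2 := hud (φ k)
  rw [Real.dist_eq, sub_zero, abs_of_nonneg infDist_nonneg] at h2
  linarith

lemma gronwall_comp {G : E → E} {K : ℝ≥0} (hG : LipschitzWith K G) {y z : ℝ → E} {t : ℝ}
    (ht : 0 ≤ t) (hy : ∀ s ∈ Set.Icc (0:ℝ) t, HasDerivAt y (G (y s)) s)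
    (hz : ∀ s ∈ Set.Icc (0:ℝ) t, HasDerivAt z (G (z s)) s) :
    dist (y t) (z t) ≤ dist (y 0) (z 0) * Real.exp (K * t) := by
  have h := dist_le_of_trajectories_ODE (v := fun _ a => G a) (K := K)
    (fun _ => hG)
    (fun s hs => (hy s hs).continuousAt.continuousWithinAt)
    (fun s hs => (hy s (Set.Ico_subset_Icc_self hs)).hasDerivWithinAt)
    (fun s hs => (hz s hs).continuousAt.continuousWithinAt)
    (fun s hs => (hz s (Set.Ico_subset_Icc_self hs)).hasDerivWithinAt)
    (le_refl (dist (y 0) (z 0))) t (Set.mem_Icc.2 ⟨ht, le_refl t⟩)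
  simpa using h

/-- the global invariant set theorem (LaSalle). If `V` is a radially
unbounded `C¹` function nonincreasing along the locally Lipschitz vector field `F`,
then from every initial condition the solution exists for all `t ≥ 0` and is bounded,
its ω-limit set is nonempty, compact, invariant, and contained in
`R = {x : ⟪∇V(x), F(x)⟫ = 0}`, and the solution converges to the largest invariant
set contained in `R`. -/
theorem global_invariant_set_theorem (n : ℕ)
    (F : EuclideanSpace ℝ (Fin n) → EuclideanSpace ℝ (Fin n)) (hF : LocallyLipschitz F)
    (V : EuclideanSpace ℝ (Fin n) → ℝ) (hV : ContDiff ℝ 1 V)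
    (hcoercive : Tendsto V (cocompact (EuclideanSpace ℝ (Fin n))) atTop)
    (hdissip : ∀ a, ⟪gradient V a, F a⟫ ≤ 0) :
    ∀ x₀ : EuclideanSpace ℝ (Fin n),
      (∃ x : ℝ → EuclideanSpace ℝ (Fin n),
        x 0 = x₀ ∧ ∀ t, 0 ≤ t → HasDerivAt x (F (x t)) t)
      ∧ ∀ x : ℝ → EuclideanSpace ℝ (Fin n), x 0 = x₀ →
          (∀ t, 0 ≤ t → HasDerivAt x (F (x t)) t) →
          Bornology.IsBounded (x '' Set.Ici (0 : ℝ))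
          ∧ (omegaLimitSet x).Nonempty
          ∧ IsCompact (omegaLimitSet x)
          ∧ IsFlowInvariant F (omegaLimitSet x)
          ∧ omegaLimitSet x ⊆ {a | ⟪gradient V a, F a⟫ = 0}
          ∧ Tendsto
              (fun t => infDist (x t)
                (⋃₀ {I | IsFlowInvariant F I ∧ I ⊆ {a | ⟪gradient V a, F a⟫ = 0}}))
              atTop (𝓝 0) := by
  -- a packaged existence result, from the truncation lemma
  have hexist : ∀ x₀ : EuclideanSpace ℝ (Fin n), ∃ x : ℝ → EuclideanSpace ℝ (Fin n),
      x 0 = x₀ ∧ ∀ t, 0 ≤ t → HasDerivAt x (F (x t)) t := by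
    intro x₀
    obtain ⟨K, G, hGlip, hGS, hGdissip, y, hy0, hyderiv⟩ :=
      exists_truncation F hF V hV hcoercive hdissip x₀
    have hanti : AntitoneOn (fun t => V (y t)) (Set.Ici 0) :=
      antitoneOn_V_comp hV (fun t _ => hyderiv t) (fun t _ => hGdissip (y t))
    have hyS : ∀ t : ℝ, 0 ≤ t → V (y t) ≤ V x₀ := by
      intro t ht
      have h := hanti Set.self_mem_Ici ht ht
      simp only at h
      rwa [hy0] at h
    exact ⟨y, hy0, fun t ht => by
      have := hyderiv t
      rwa [hGS (y t) (hyS t ht)] at this⟩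
  intro x₀
  refine ⟨hexist x₀, ?_⟩
  intro x hx0 hxd
  obtain ⟨K, G, hGlip, hGS, hGdissip, -⟩ :=
    exists_truncation F hF V hV hcoercive hdissip x₀
  set S : Set (EuclideanSpace ℝ (Fin n)) := {a | V a ≤ V x₀} with hSdef
  have hS : IsCompact S := isCompact_sublevel hV.continuous hcoercive _
  -- every F-trajectory starting in S is trapped in S and is a G-trajectory
  have htrap : ∀ z : ℝ → EuclideanSpace ℝ (Fin n),
      (∀ t, 0 ≤ t → HasDerivAt z (F (z t)) t) → V (z 0) ≤ V x₀ →
      ∀ t, 0 ≤ t → V (z t) ≤ V x₀ := by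
    intro z hz h0 t ht
    have hanti : AntitoneOn (fun t => V (z t)) (Set.Ici 0) :=
      antitoneOn_V_comp hV (fun t ht => hz t ht) (fun t _ => hdissip (z t))
    have h := hanti Set.self_mem_Ici ht ht
    simp only at h
    exact le_trans h h0
  have hGtraj : ∀ z : ℝ → EuclideanSpace ℝ (Fin n),
      (∀ t, 0 ≤ t → HasDerivAt z (F (z t)) t) → V (z 0) ≤ V x₀ →
      ∀ t, 0 ≤ t → HasDerivAt z (G (z t)) t := by
    intro z hz h0 t ht
    have := hz t ht
    rwa [← hGS (z t) (htrap z hz h0 t ht)] at this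
  have hx00 : V (x 0) ≤ V x₀ := by rw [hx0]
  have hxS : ∀ t : ℝ, 0 ≤ t → x t ∈ S := fun t ht => htrap x hxd hx00 t ht
  have hxG : ∀ t : ℝ, 0 ≤ t → HasDerivAt x (G (x t)) t := hGtraj x hxd hx00
  have himg : x '' Set.Ici 0 ⊆ S := by rintro b ⟨t, ht, rfl⟩; exact hxS t ht
  have hΩS : omegaLimitSet x ⊆ S :=
    (omega_subset_closure x).trans (closure_minimal himg hS.isClosed)
  have hΩne : (omegaLimitSet x).Nonempty := omega_nonempty hS hxS
  have hΩcpt : IsCompact (omegaLimitSet x) :=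
    hS.of_isClosed_subset (omega_closed x) hΩS
  -- invariance of the omega limit set
  have hinv : IsFlowInvariant F (omegaLimitSet x) := by
    intro z hzderiv hz0 t ht
    have hz0S : V (z 0) ≤ V x₀ := hΩS hz0
    have hzG : ∀ s, 0 ≤ s → HasDerivAt z (G (z s)) s := hGtraj z hzderiv hz0S
    obtain ⟨u, hu, hconv⟩ := hz0
    obtain ⟨K₀, hK₀⟩ := (hu.eventually_ge_atTop 0).exists_forall_of_atTop
    set u' : ℕ → ℝ := fun k => u (k + K₀) with hu'def
    have hu' : Tendsto u' atTop atTop := hu.comp (tendsto_add_atTop_nat K₀)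
    have hconv' : Tendsto (fun k => x (u' k)) atTop (𝓝 (z 0)) :=
      hconv.comp (tendsto_add_atTop_nat K₀)
    have hu'0 : ∀ k, 0 ≤ u' k := fun k => hK₀ (k + K₀) (Nat.le_add_left _ _)
    refine ⟨fun k => u' k + t, tendsto_atTop_add_const_right _ t hu', ?_⟩
    have hbound : ∀ k, dist (x (u' k + t)) (z t) ≤
        dist (x (u' k)) (z 0) * Real.exp (K * t) := by
      intro k
      have hy : ∀ s ∈ Set.Icc (0:ℝ) t,
          HasDerivAt (fun s => x (u' k + s)) (G (x (u' k + s))) s := by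
        intro s hs
        have h1 : HasDerivAt x (G (x (u' k + s))) (u' k + s) :=
          hxG (u' k + s) (by have := hs.1; have := hu'0 k; linarith)
        have h2 : HasDerivAt (fun s : ℝ => u' k + s) 1 s :=
          (hasDerivAt_id s).const_add (u' k)
        have := h1.scomp s h2
        rw [one_smul] at this
        exact this
      have hz' : ∀ s ∈ Set.Icc (0:ℝ) t, HasDerivAt z (G (z s)) s :=
        fun s hs => hzG s hs.1
      have := gronwall_comp hGlip ht hy hz'
      simpa using this
    refine tendsto_iff_dist_tendsto_zero.2 ?_
    have hd0 : Tendsto (fun k => dist (x (u' k)) (z 0) * Real.exp (K * t))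
        atTop (𝓝 0) := by
      have := (tendsto_iff_dist_tendsto_zero.1 hconv').mul_const (Real.exp (K * t))
      simpa using this
    exact squeeze_zero (fun k => dist_nonneg) hbound hd0
  -- the limit of V along the trajectory
  obtain ⟨am, hamS, hmin⟩ := hS.exists_isMinOn ⟨x₀, show V x₀ ≤ V x₀ from le_rfl⟩
    hV.continuous.continuousOn
  set W : ℝ → ℝ := fun t => V (x (max t 0)) with hWdef
  have hantiX : AntitoneOn (fun t => V (x t)) (Set.Ici 0) :=
    antitoneOn_V_comp hV (fun t ht => hxd t ht) (fun t _ => hdissip (x t))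
  have hWanti : Antitone W := by
    intro s t hst
    exact hantiX (Set.mem_Ici.2 (le_max_right s 0)) (Set.mem_Ici.2 (le_max_right t 0))
      (max_le_max hst le_rfl)
  have hWbdd : BddBelow (Set.range W) := by
    refine ⟨V am, ?_⟩
    rintro r ⟨t, rfl⟩
    exact hmin (hxS (max t 0) (le_max_right t 0))
  have hWlim := tendsto_atTop_ciInf hWanti hWbdd
  set c : ℝ := ⨅ t, W t with hcdef
  have hVx : Tendsto (fun t => V (x t)) atTop (𝓝 c) := by
    refine hWlim.congr' ?_
    filter_upwards [eventually_ge_atTop (0:ℝ)] with t ht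
    rw [hWdef]; simp [max_eq_left ht]
  have hconst : ∀ a ∈ omegaLimitSet x, V a = c := by
    rintro a ⟨u, hu, hconv⟩
    have h1 : Tendsto (fun k => V (x (u k))) atTop (𝓝 (V a)) :=
      (hV.continuous.tendsto a).comp hconv
    have h2 : Tendsto (fun k => V (x (u k))) atTop (𝓝 c) := hVx.comp hu
    exact tendsto_nhds_unique h1 h2
  -- the omega limit set is contained in R
  have hΩR : omegaLimitSet x ⊆ {a | ⟪gradient V a, F a⟫ = 0} := by
    intro a haΩ
    obtain ⟨y, hy0, hyF⟩ := hexist a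
    have hyΩ : ∀ s : ℝ, 0 ≤ s → y s ∈ omegaLimitSet x :=
      hinv y hyF (hy0 ▸ haΩ)
    have hyc : ∀ s : ℝ, 0 ≤ s → V (y s) = c := fun s hs => hconst _ (hyΩ s hs)
    have hd : HasDerivAt (fun s => V (y s)) ⟪gradient V (y 0), F (y 0)⟫ 0 :=
      gradient_chain hV (hyF 0 le_rfl)
    have h0 : HasDerivWithinAt (fun s => V (y s)) 0 (Set.Ici 0) 0 :=
      (hasDerivWithinAt_const 0 (Set.Ici 0) c).congr
        (fun s hs => hyc s hs) (hyc 0 le_rfl)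
    have huniq : UniqueDiffWithinAt ℝ (Set.Ici (0:ℝ)) 0 :=
      uniqueDiffOn_Ici 0 0 Set.self_mem_Ici
    have e1 := hd.hasDerivWithinAt.derivWithin huniq
    have e2 := h0.derivWithin huniq
    have : ⟪gradient V (y 0), F (y 0)⟫ = 0 := by rw [← e1, e2]
    rwa [hy0] at this
  refine ⟨hS.isBounded.subset himg, hΩne, hΩcpt, hinv, hΩR, ?_⟩
  -- convergence to the largest invariant set
  have hΩM : omegaLimitSet x ⊆
      ⋃₀ {I | IsFlowInvariant F I ∧ I ⊆ {a | ⟪gradient V a, F a⟫ = 0}} :=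
    fun a ha => ⟨omegaLimitSet x, ⟨hinv, hΩR⟩, ha⟩
  have hd0 := omega_dist_tendsto hS hxS
  exact squeeze_zero (fun t => infDist_nonneg)
    (fun t => infDist_le_infDist_of_subset hΩM hΩne) hd0
end
end

section
/- Let y₁, y₂, y₃ ∈ ℝ³ be the vertices of an equilateral triangle centered at the origin in the z = 0 plane, yᵢ = l(cos(2π(i−1)/3), sin(2π(i−1)/3), 0) with l > 0, with equal masses m > 0 and equal spring constants k > 0, and take the body-frame coordinates x̃ᵢ = yᵢ. For θ ∈ ℝ let R_θ = D · R_z(θ), where R_z(θ) is the rotation by θ about the z-axis and D = diag(1, −1, −1) is the rotation by π about the x-axis. Then R_θ ∈ SO(3) and, for every θ, the total spring force and total spring torque vanish: Σᵢ k(yᵢ − R_θ x̃ᵢ − 0) = 0 and Σᵢ k x̃ᵢ × (R_θᵀ yᵢ) = 0. Consequently every state (0, R_θ, 0, 0) is an equilibrium of the registration dynamics, and since θ ↦ R_θ is injective on [0, 2π), the system has infinitely many equilibrium points. -/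
open Matrix Filter
open scoped RealInnerProductSpace

noncomputable section

lemma injOn_angle : Set.InjOn (fun θ : ℝ => (θ : Real.Angle)) (Set.Ico 0 (2 * Real.pi)) := by
  intro a ha b hb hab
  rcases Real.Angle.angle_eq_iff_two_pi_dvd_sub.1 hab with ⟨k, hk⟩
  have hπ := Real.pi_pos
  have h1 : (k : ℝ) < 1 := by nlinarith [ha.1, ha.2, hb.1, hb.2]
  have h2 : (-1 : ℝ) < (k : ℝ) := by nlinarith [ha.1, ha.2, hb.1, hb.2]
  have hk1 : k < 1 := by exact_mod_cast h1
  have hk2 : (-1 : ℤ) < k := by exact_mod_cast h2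
  have hk0 : k = 0 := by omega
  have : a - b = 0 := by rw [hk, hk0]; simp
  linarith

/-- for an equilateral triangle centered at the origin, every rotation
`R_θ = D ⬝ R_z(θ)` (a rotation by θ about the z-axis followed by a flip by π about
the x-axis) gives a torque- and force-balanced configuration; hence the registration
dynamics has infinitely many equilibrium points. -/
theorem equilateral_triangle_infinite_equilibria (l : ℝ) (hl : 0 < l)
    (mass kspring : ℝ) (hmass : 0 < mass) (hk : 0 < kspring)
    (y : Fin 3 → V3)
    (hy : ∀ i : Fin 3, y i =
      l • ![Real.cos (2 * Real.pi * ((i : ℕ) : ℝ) / 3),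
            Real.sin (2 * Real.pi * ((i : ℕ) : ℝ) / 3), 0])
    (xt : Fin 3 → V3) (hxt : ∀ i, xt i = y i)
    (Rz : ℝ → Matrix (Fin 3) (Fin 3) ℝ)
    (hRz : ∀ θ, Rz θ = !![Real.cos θ, -Real.sin θ, 0;
                           Real.sin θ, Real.cos θ, 0;
                           0, 0, 1])
    (D : Matrix (Fin 3) (Fin 3) ℝ)
    (hD : D = !![1, 0, 0; 0, -1, 0; 0, 0, -1]) :
    (∀ θ : ℝ, isSO3 (D * Rz θ)
      ∧ ∑ i, kspring • (y i - act (D * Rz θ) (xt i) - (0 : V3)) = 0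
      ∧ ∑ i, kspring • cross3 (xt i) (act (D * Rz θ)ᵀ (y i)) = 0)
    ∧ Set.InjOn (fun θ => D * Rz θ) (Set.Ico 0 (2 * Real.pi))
    ∧ Set.Infinite {s : V3 × Matrix (Fin 3) (Fin 3) ℝ × V3 × V3 |
        isSO3 s.2.1 ∧ s.2.2.1 = 0 ∧ s.2.2.2 = 0
        ∧ ∑ i, kspring • (y i - act s.2.1 (xt i) - s.1) = 0
        ∧ ∑ i, kspring • cross3 (xt i) (act s.2.1ᵀ (y i - s.1)) = 0} := by
  have h3 : Real.sqrt 3 * Real.sqrt 3 = 3 := Real.mul_self_sqrt (by norm_num)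
  -- concrete vertex coordinates
  have hy0 : (y 0 : Fin 3 → ℝ) = l • ![1, 0, 0] := by
    have := hy 0; simpa using this
  have hy1 : (y 1 : Fin 3 → ℝ) = l • ![-(1/2), Real.sqrt 3 / 2, 0] := by
    have hc : Real.cos (2 * Real.pi * ((((1:Fin 3):ℕ)) : ℝ) / 3) = -(1/2) := by
      have h : 2 * Real.pi * ((((1:Fin 3):ℕ)):ℝ) / 3 = Real.pi - Real.pi/3 := by norm_num; ring
      rw [h, Real.cos_pi_sub, Real.cos_pi_div_three]
    have hs : Real.sin (2 * Real.pi * ((((1:Fin 3):ℕ)) : ℝ) / 3) = Real.sqrt 3 / 2 := by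
      have h : 2 * Real.pi * ((((1:Fin 3):ℕ)):ℝ) / 3 = Real.pi - Real.pi/3 := by norm_num; ring
      rw [h, Real.sin_pi_sub, Real.sin_pi_div_three]
    rw [hy 1, hc, hs]
  have hy2 : (y 2 : Fin 3 → ℝ) = l • ![-(1/2), -(Real.sqrt 3 / 2), 0] := by
    have hc : Real.cos (2 * Real.pi * ((((2:Fin 3):ℕ)) : ℝ) / 3) = -(1/2) := by
      have h : 2 * Real.pi * ((((2:Fin 3):ℕ)):ℝ) / 3 = Real.pi + Real.pi/3 := by norm_num; ring
      rw [h, Real.cos_add, Real.cos_pi, Real.sin_pi, Real.cos_pi_div_three]; ring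
    have hs : Real.sin (2 * Real.pi * ((((2:Fin 3):ℕ)) : ℝ) / 3) = -(Real.sqrt 3 / 2) := by
      have h : 2 * Real.pi * ((((2:Fin 3):ℕ)):ℝ) / 3 = Real.pi + Real.pi/3 := by norm_num; ring
      rw [h, Real.sin_add, Real.cos_pi, Real.sin_pi, Real.sin_pi_div_three]; ring
    rw [hy 2, hc, hs]
  have key : ∀ θ : ℝ, isSO3 (D * Rz θ)
      ∧ ∑ i, kspring • (y i - act (D * Rz θ) (xt i) - (0 : V3)) = 0
      ∧ ∑ i, kspring • cross3 (xt i) (act (D * Rz θ)ᵀ (y i)) = 0 := by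
    intro θ
    have hpyth := Real.sin_sq_add_cos_sq θ
    refine ⟨⟨?_, ?_⟩, ?_, ?_⟩
    · ext i j
      fin_cases i <;> fin_cases j <;>
        simp [hRz, hD, Matrix.mul_apply, Fin.sum_univ_three, Matrix.one_apply,
          Matrix.transpose_apply, Matrix.vecHead, Matrix.vecTail] <;>
        linarith [hpyth]
    · rw [Matrix.det_mul, hRz, hD, Matrix.det_fin_three, Matrix.det_fin_three]
      simp
      linear_combination hpyth
    · ext j
      have : ∀ i, kspring • (y i - act (D * Rz θ) (xt i) - (0 : V3)) j
          = kspring * ((y i) j - (act (D * Rz θ) (xt i)) j) := by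
        intro i; simp [PiLp.smul_apply, PiLp.sub_apply]
      fin_cases j <;>
        simp [Finset.sum_apply, Fin.sum_univ_three, act, hxt, hy0, hy1, hy2, hRz, hD,
          Matrix.mulVec, dotProduct, PiLp.smul_apply, PiLp.sub_apply,
          Matrix.transpose_apply, Matrix.vecHead, Matrix.vecTail] <;>
        ring
    · ext j
      fin_cases j <;>
        simp [Finset.sum_apply, Fin.sum_univ_three, cross3, act, hxt, hy0, hy1, hy2, hRz, hD,
          Matrix.mulVec, dotProduct, PiLp.smul_apply, PiLp.sub_apply,
          Matrix.transpose_apply, Matrix.vecHead, Matrix.vecTail] <;>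
        linear_combination (kspring * l^2 * Real.sin θ / 2) * h3
  have hinj : Set.InjOn (fun θ => D * Rz θ) (Set.Ico 0 (2 * Real.pi)) := by
    intro a ha b hb hab
    have hcos : Real.cos a = Real.cos b := by
      have := congrFun (congrFun hab 0) 0
      simpa [hRz, hD, Matrix.mul_apply, Fin.sum_univ_three] using this
    have hsin : Real.sin a = Real.sin b := by
      have := congrFun (congrFun hab 1) 0
      have h' : -Real.sin a * -1 = -Real.sin b * -1 := by
        simpa [hRz, hD, Matrix.mul_apply, Fin.sum_univ_three] using this
      nlinarith [h']
    have := Real.Angle.cos_sin_inj hcos hsin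
    exact injOn_angle ha hb this
  refine ⟨key, hinj, ?_⟩
  apply Set.infinite_of_injOn_mapsTo
    (f := fun θ : ℝ => ((0 : V3), D * Rz θ, (0 : V3), (0 : V3))) (s := Set.Ico 0 (2 * Real.pi))
  · intro a ha b hb hab
    exact hinj ha hb (congrArg (fun s => s.2.1) hab)
  · intro θ _
    obtain ⟨hso, hforce, htorque⟩ := key θ
    refine ⟨hso, rfl, rfl, ?_, ?_⟩
    · simpa using hforce
    · simpa using htorque
  · exact Set.Ico_infinite (by positivity)
end
end

section
/- Let y₁, y₂, y₃, y₄ ∈ ℝ³ be the vertices of a square centered at the origin in the z = 0 plane, yᵢ = l(cos(π(i−1)/2), sin(π(i−1)/2), 0) with l > 0, with equal masses m > 0 and equal spring constants k > 0, and take the body-frame coordinates x̃ᵢ = yᵢ. For θ ∈ ℝ let R_θ = D · R_z(θ), where R_z(θ) is the rotation by θ about the z-axis and D = diag(1, −1, −1). Then R_θ ∈ SO(3) and, for every θ, Σᵢ k(yᵢ − R_θ x̃ᵢ − 0) = 0 and Σᵢ k x̃ᵢ × (R_θᵀ yᵢ) = 0; hence every state (0, R_θ, 0, 0) is an equilibrium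 of the registration dynamics, and the system has infinitely many equilibrium points. -/
open Matrix Filter
open scoped RealInnerProductSpace

noncomputable section

lemma aux_subset (kspring : ℝ) (y xt : Fin 4 → V3) (D : Matrix (Fin 3) (Fin 3) ℝ)
    (Rz : ℝ → Matrix (Fin 3) (Fin 3) ℝ)
    (key : ∀ θ : ℝ, isSO3 (D * Rz θ)
      ∧ ∑ i, kspring • (y i - act (D * Rz θ) (xt i) - (0 : V3)) = 0
      ∧ ∑ i, kspring • cross3 (xt i) (act (D * Rz θ)ᵀ (y i)) = 0) :
    (fun θ : ℝ => ((0 : V3), D * Rz θ, (0 : V3), (0 : V3))) '' Set.Ioo 0 Real.pi ⊆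
      {s : V3 × Matrix (Fin 3) (Fin 3) ℝ × V3 × V3 |
        isSO3 s.2.1 ∧ s.2.2.1 = 0 ∧ s.2.2.2 = 0
        ∧ ∑ i, kspring • (y i - act s.2.1 (xt i) - s.1) = 0
        ∧ ∑ i, kspring • cross3 (xt i) (act s.2.1ᵀ (y i - s.1)) = 0} := by
  rintro s ⟨θ, -, rfl⟩
  obtain ⟨hso3, hforce, htorque⟩ := key θ
  refine ⟨hso3, rfl, rfl, hforce, ?_⟩
  simp only [sub_zero]
  exact htorque

lemma aux_injOn (D : Matrix (Fin 3) (Fin 3) ℝ) (Rz : ℝ → Matrix (Fin 3) (Fin 3) ℝ)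
    (hM : ∀ θ : ℝ, D * Rz θ =
      !![Real.cos θ, -Real.sin θ, 0; -Real.sin θ, -Real.cos θ, 0; 0, 0, -1]) :
    Set.InjOn (fun θ : ℝ => ((0 : V3), D * Rz θ, (0 : V3), (0 : V3)))
      (Set.Ioo 0 Real.pi) := by
  intro a ha b hb hab
  have hmat : D * Rz a = D * Rz b := congrArg (fun s => s.2.1) hab
  rw [hM a, hM b] at hmat
  have hcos : Real.cos a = Real.cos b := by
    have := congrFun (congrFun hmat 0) 0
    simpa using this
  exact Real.injOn_cos ⟨le_of_lt ha.1, le_of_lt ha.2⟩ ⟨le_of_lt hb.1, le_of_lt hb.2⟩ hcos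

/-- for a square centered at the origin, every rotation
`R_θ = D ⬝ R_z(θ)` (a rotation by θ about the z-axis followed by a flip by π about
the x-axis) gives a torque- and force-balanced configuration; hence the registration
dynamics has infinitely many equilibrium points. -/
theorem square_infinite_equilibria (l : ℝ) (hl : 0 < l)
    (mass kspring : ℝ) (hmass : 0 < mass) (hk : 0 < kspring)
    (y : Fin 4 → V3)
    (hy : ∀ i : Fin 4, y i =
      l • ![Real.cos (Real.pi * ((i : ℕ) : ℝ) / 2),
            Real.sin (Real.pi * ((i : ℕ) : ℝ) / 2), 0])
    (xt : Fin 4 → V3) (hxt : ∀ i, xt i = y i)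
    (Rz : ℝ → Matrix (Fin 3) (Fin 3) ℝ)
    (hRz : ∀ θ, Rz θ = !![Real.cos θ, -Real.sin θ, 0;
                           Real.sin θ, Real.cos θ, 0;
                           0, 0, 1])
    (D : Matrix (Fin 3) (Fin 3) ℝ)
    (hD : D = !![1, 0, 0; 0, -1, 0; 0, 0, -1]) :
    (∀ θ : ℝ, isSO3 (D * Rz θ)
      ∧ ∑ i, kspring • (y i - act (D * Rz θ) (xt i) - (0 : V3)) = 0
      ∧ ∑ i, kspring • cross3 (xt i) (act (D * Rz θ)ᵀ (y i)) = 0)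
    ∧ Set.Infinite {s : V3 × Matrix (Fin 3) (Fin 3) ℝ × V3 × V3 |
        isSO3 s.2.1 ∧ s.2.2.1 = 0 ∧ s.2.2.2 = 0
        ∧ ∑ i, kspring • (y i - act s.2.1 (xt i) - s.1) = 0
        ∧ ∑ i, kspring • cross3 (xt i) (act s.2.1ᵀ (y i - s.1)) = 0} := by
  -- explicit values of the four points
  have h0 : y 0 = ![l, 0, 0] := by
    rw [hy]; funext j; fin_cases j <;> simp
  have h1 : y 1 = ![0, l, 0] := by
    rw [hy]; funext j; fin_cases j <;> simp [Real.cos_pi_div_two, Real.sin_pi_div_two]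
  have h2 : y 2 = ![-l, 0, 0] := by
    rw [hy]; funext j; fin_cases j <;> simp
  have h3 : y 3 = ![0, -l, 0] := by
    have hc : Real.cos (Real.pi * 3 / 2) = 0 := by
      have h : Real.pi * 3 / 2 = Real.pi + Real.pi / 2 := by ring
      rw [h, Real.cos_add]; simp
    have hs : Real.sin (Real.pi * 3 / 2) = -1 := by
      have h : Real.pi * 3 / 2 = Real.pi + Real.pi / 2 := by ring
      rw [h, Real.sin_add]; simp
    have hv : (((3:Fin 4):ℕ):ℝ) = (3:ℝ) := by
      rw [show ((3:Fin 4):ℕ) = 3 from rfl]; norm_num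
    rw [hy]; funext j; fin_cases j <;> simp [hv, hc, hs]
  -- the explicit rotated-and-flipped matrix
  have hM : ∀ θ : ℝ, D * Rz θ =
      !![Real.cos θ, -Real.sin θ, 0; -Real.sin θ, -Real.cos θ, 0; 0, 0, -1] := by
    intro θ
    rw [hD, hRz]
    ext i j
    fin_cases i <;> fin_cases j <;> simp [Matrix.mul_apply, Fin.sum_univ_three]
  have key : ∀ θ : ℝ, isSO3 (D * Rz θ)
      ∧ ∑ i, kspring • (y i - act (D * Rz θ) (xt i) - (0 : V3)) = 0
      ∧ ∑ i, kspring • cross3 (xt i) (act (D * Rz θ)ᵀ (y i)) = 0 := by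
    intro θ
    rw [hM θ]
    refine ⟨⟨?_, ?_⟩, ?_, ?_⟩
    · ext i j
      fin_cases i <;> fin_cases j <;>
        simp [Matrix.mul_apply, Fin.sum_univ_three, Matrix.one_apply, Matrix.transpose,
          Matrix.vecHead, Matrix.vecTail] <;>
        nlinarith [Real.sin_sq_add_cos_sq θ]
    · simp only [Matrix.det_fin_three]
      simp
      nlinarith [Real.sin_sq_add_cos_sq θ]
    · rw [Fin.sum_univ_four, hxt, hxt, hxt, hxt]
      ext j
      fin_cases j <;>
        simp [act, Matrix.mulVec, dotProduct, Fin.sum_univ_three, h0, h1, h2, h3,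
          Matrix.vecHead, Matrix.vecTail] <;> ring
    · rw [Fin.sum_univ_four, hxt, hxt, hxt, hxt]
      ext j
      fin_cases j <;>
        simp [act, cross3, Matrix.mulVec, dotProduct, Fin.sum_univ_three, h0, h1, h2, h3,
          Matrix.transpose, Matrix.vecHead, Matrix.vecTail] <;> ring
  refine ⟨key, ?_⟩
  exact Set.Infinite.mono (aux_subset kspring y xt D Rz key)
    ((Set.Ioo.infinite Real.pi_pos |> Set.infinite_coe_iff.mp).image (aux_injOn D Rz hM))
end
end
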